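/- Suppose M is a 2^ℓ × 2^ℓ matrix of natural numbers with maximum entry μ such that (a) every row and column of M contains at most 3·2^{ℓ−2} distinct values, (b) M has no 2×2 constant submatrix (no i ≠ i', j ≠ j' with M(i,j) = M(i,j') = M(i',j) = M(i',j')), and (c) no value appears in two entries forming a non-shuffle-preserved pattern, i.e., whenever M(i,j) = M(i',j') = c with i ≠ i' and j ≠ j', also M(i,j') = M(i',j) = c. Then the 2^{ℓ+1} × 2^{ℓ+1} block matrix M' = [M, μ+M; 2μ+M, 3μ+M] (adding the scalar t·μ to every entry of the corresponding block) satisfies: every row and column of M' contains at most 3·2^{ℓ−1} distinct values, M' has no 2×2 constant submatrix, and M' satisfies the same shuffle-preservation condition (c). -/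
import Mathlib

lemma two_shift_image_card {n : ℕ} (f : Fin n ⊕ Fin n → ℕ) (g : Fin n → ℕ) (c d : ℕ)
    (hf1 : ∀ j, f (Sum.inl j) = c + g j) (hf2 : ∀ j, f (Sum.inr j) = d + g j) :
    (Finset.univ.image f).card ≤ 2 * (Finset.univ.image g).card := by
  have hsub : Finset.univ.image f ⊆
      (Finset.univ.image g).image (c + ·) ∪ (Finset.univ.image g).image (d + ·) := by
    intro x hx
    simp only [Finset.mem_image, Finset.mem_union, Finset.mem_univ, true_and] at hx ⊢
    obtain ⟨j, hj⟩ := hx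
    rcases j with j | j
    · exact Or.inl ⟨g j, ⟨j, rfl⟩, by rw [← hj, hf1]⟩
    · exact Or.inr ⟨g j, ⟨j, rfl⟩, by rw [← hj, hf2]⟩
  calc (Finset.univ.image f).card
      ≤ ((Finset.univ.image g).image (c + ·) ∪ (Finset.univ.image g).image (d + ·)).card :=
        Finset.card_le_card hsub
    _ ≤ ((Finset.univ.image g).image (c + ·)).card + ((Finset.univ.image g).image (d + ·)).card :=
        Finset.card_union_le _ _
    _ ≤ 2 * (Finset.univ.image g).card := by
        have := Finset.card_image_le (s := Finset.univ.image g) (f := (c + ·))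
        have := Finset.card_image_le (s := Finset.univ.image g) (f := (d + ·))
        omega

/-- Inductive step of the recursive matrix construction: doubling a good
2^ℓ × 2^ℓ matrix via the block construction [M, μ+M; 2μ+M, 3μ+M] preserves
the absence of constant 2×2 submatrices and shuffle-preservation, and at
most doubles the number of distinct values per row/column. -/
theorem block_matrix_step
    (ℓ : ℕ) (hℓ : 2 ≤ ℓ)
    (M : Fin (2 ^ ℓ) → Fin (2 ^ ℓ) → ℕ) (μ : ℕ)
    (hpos : ∀ i j, 1 ≤ M i j)
    (hle : ∀ i j, M i j ≤ μ)
    (hattained : ∃ i j, M i j = μ)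
    (hrow : ∀ i, (Finset.univ.image (fun j => M i j)).card ≤ 3 * 2 ^ (ℓ - 2))
    (hcol : ∀ j, (Finset.univ.image (fun i => M i j)).card ≤ 3 * 2 ^ (ℓ - 2))
    (hK22 : ¬ ∃ i i' j j', i ≠ i' ∧ j ≠ j' ∧
      M i j = M i j' ∧ M i j = M i' j ∧ M i j = M i' j')
    (hshuffle : ∀ i i' j j', i ≠ i' → j ≠ j' → M i j = M i' j' →
      M i j' = M i j ∧ M i' j = M i j)
    (M' : (Fin (2 ^ ℓ) ⊕ Fin (2 ^ ℓ)) → (Fin (2 ^ ℓ) ⊕ Fin (2 ^ ℓ)) → ℕ)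
    (hM' : ∀ i j,
      M' (Sum.inl i) (Sum.inl j) = M i j ∧
      M' (Sum.inl i) (Sum.inr j) = μ + M i j ∧
      M' (Sum.inr i) (Sum.inl j) = 2 * μ + M i j ∧
      M' (Sum.inr i) (Sum.inr j) = 3 * μ + M i j) :
    (∀ i, (Finset.univ.image (fun j => M' i j)).card ≤ 3 * 2 ^ (ℓ - 1)) ∧
    (∀ j, (Finset.univ.image (fun i => M' i j)).card ≤ 3 * 2 ^ (ℓ - 1)) ∧
    (¬ ∃ i i' j j', i ≠ i' ∧ j ≠ j' ∧
      M' i j = M' i j' ∧ M' i j = M' i' j ∧ M' i j = M' i' j') ∧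
    (∀ i i' j j', i ≠ i' → j ≠ j' → M' i j = M' i' j' →
      M' i j' = M' i j ∧ M' i' j = M' i j) := by
  have hA : ∀ i j, M' (Sum.inl i) (Sum.inl j) = M i j := fun i j => (hM' i j).1
  have hB : ∀ i j, M' (Sum.inl i) (Sum.inr j) = μ + M i j := fun i j => (hM' i j).2.1
  have hC : ∀ i j, M' (Sum.inr i) (Sum.inl j) = 2 * μ + M i j := fun i j => (hM' i j).2.2.1
  have hD : ∀ i j, M' (Sum.inr i) (Sum.inr j) = 3 * μ + M i j := fun i j => (hM' i j).2.2.2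
  have hbound : 2 * (3 * 2 ^ (ℓ - 2)) = 3 * 2 ^ (ℓ - 1) := by
    have h : ℓ - 1 = (ℓ - 2) + 1 := by omega
    rw [h, pow_succ]; ring
  refine ⟨?_, ?_, ?_, ?_⟩
  · rintro (i | i)
    · have := two_shift_image_card (fun j => M' (Sum.inl i) j) (fun j => M i j) 0 μ
        (fun j => by simpa using hA i j) (fun j => hB i j)
      have := hrow i; omega
    · have := two_shift_image_card (fun j => M' (Sum.inr i) j) (fun j => M i j) (2 * μ) (3 * μ)
        (fun j => hC i j) (fun j => hD i j)
      have := hrow i; omega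
  · rintro (j | j)
    · have := two_shift_image_card (fun i => M' i (Sum.inl j)) (fun i => M i j) 0 (2 * μ)
        (fun i => by simpa using hA i j) (fun i => hC i j)
      have := hcol j; omega
    · have := two_shift_image_card (fun i => M' i (Sum.inr j)) (fun i => M i j) μ (3 * μ)
        (fun i => hB i j) (fun i => hD i j)
      have := hcol j; omega
  · rintro ⟨i, i', j, j', hii, hjj, e1, e2, e3⟩
    rcases i with ia | ia <;> rcases i' with ib | ib <;> rcases j with ja | ja <;>
      rcases j' with jb | jb <;>
      simp only [hA, hB, hC, hD] at e1 e2 e3 <;>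
      (have b1 := hpos ia ja; have b2 := hle ia ja;
       have b3 := hpos ia jb; have b4 := hle ia jb;
       have b5 := hpos ib ja; have b6 := hle ib ja;
       have b7 := hpos ib jb; have b8 := hle ib jb) <;>
      first
        | omega
        | exact hK22 ⟨ia, ib, ja, jb, fun h => hii (by rw [h]),
            fun h => hjj (by rw [h]), by omega, by omega, by omega⟩
  · intro i i' j j' hii hjj e
    rcases i with ia | ia <;> rcases i' with ib | ib <;> rcases j with ja | ja <;>
      rcases j' with jb | jb <;>
      simp only [hA, hB, hC, hD] at e ⊢ <;>
      (have b1 := hpos ia ja; have b2 := hle ia ja;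
       have b3 := hpos ia jb; have b4 := hle ia jb;
       have b5 := hpos ib ja; have b6 := hle ib ja;
       have b7 := hpos ib jb; have b8 := hle ib jb) <;>
      first
        | (exfalso; omega)
        | (obtain ⟨s1, s2⟩ := hshuffle ia ib ja jb
             (fun h => hii (by rw [h])) (fun h => hjj (by rw [h])) (by omega);
           exact ⟨by omega, by omega⟩)
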